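/- arXiv:1504.07923 — 2 statements merged into one kernel-verified Lean document; each statement's English description precedes it below -/
import Mathlib

section
/- For every δ > 0 the following hold. (i) If x and x + π both lie in D(δ), then θ(x + π|δ) = θ(x|δ) + 2πi when |Im x| < δ, and θ(x + π|δ) = θ(x|δ) when |Im x| > δ. (ii) If x and −x both lie in D(δ), then θ(−x|δ) = −θ(x|δ) + 2πi when |Im x| < δ, and θ(−x|δ) = −θ(x|δ) when |Im x| > δ. (iii) θ(π/2|δ) = 2πi and θ(0|δ) = πi. -/
/-- The kernel `K(x|δ) = (1/(2πi))·(cot(x − iδ) − cot(x + iδ))`. -/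
noncomputable def Kker (δ : ℝ) (x : ℂ) : ℂ :=
  (1 / (2 * (Real.pi : ℂ) * Complex.I)) *
    (Complex.cot (x - Complex.I * δ) - Complex.cot (x + Complex.I * δ))

/-- The cut domain `D(δ)`: the plane minus the four horizontal rays
`{t ± iδ : t ≥ 0}` and `{t ± iδ : t ≤ −π}`. -/
def Ddom (δ : ℝ) : Set ℂ :=
  {x | ¬ ((x.im = δ ∨ x.im = -δ) ∧ (0 ≤ x.re ∨ x.re ≤ -Real.pi))}

/-- `θ(x|δ)`: `2πi` times the integral of `K(·|δ)` along the contour running from `−π/2`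
vertically to `−π/2 + i·Im x` and then horizontally to `x`. -/
noncomputable def thetaFn (δ : ℝ) (x : ℂ) : ℂ :=
  2 * (Real.pi : ℂ) * Complex.I *
    (Complex.I * (∫ t in (0:ℝ)..x.im, Kker δ ((-(Real.pi/2) : ℝ) + Complex.I * (t : ℂ)))
      + ∫ u in (-(Real.pi/2) : ℝ)..x.re, Kker δ ((u : ℂ) + Complex.I * (x.im : ℂ)))

open Complex intervalIntegral

/-! ### Elementary lemmas on `sin`, `cot` -/

lemma sin_ne_zero_of_im' {z : ℂ} (h : z.im ≠ 0) : Complex.sin z ≠ 0 := by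
  rw [Complex.sin_ne_zero_iff]
  intro k hk
  apply h
  rw [hk]
  simp

lemma sin_ne_zero_of_re_half' {z : ℂ} (h : z.re = -(Real.pi/2)) : Complex.sin z ≠ 0 := by
  rw [Complex.sin_ne_zero_iff]
  intro k hk
  have hre : z.re = (k : ℝ) * Real.pi := by rw [hk]; simp
  rw [h] at hre
  have hπ := Real.pi_pos
  have hk1 : (k:ℝ) ≤ -1 ∨ 0 ≤ (k:ℝ) := by
    rcases le_or_gt k (-1) with h' | h'
    · left; exact_mod_cast h'
    · right; exact_mod_cast h'
  rcases hk1 with hk0 | hk0 <;> nlinarith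

lemma cot_add_pi' (z : ℂ) : Complex.cot (z + Real.pi) = Complex.cot z := by
  unfold Complex.cot
  rw [Complex.sin_add_pi, Complex.cos_add_pi, neg_div_neg_eq]

lemma cot_neg' (z : ℂ) : Complex.cot (-z) = -Complex.cot z := by
  unfold Complex.cot
  rw [Complex.sin_neg, Complex.cos_neg, div_neg]

lemma Kker_add_pi (δ : ℝ) (z : ℂ) : Kker δ (z + Real.pi) = Kker δ z := by
  unfold Kker
  rw [show z + (Real.pi:ℂ) - Complex.I*δ = (z - Complex.I*δ) + Real.pi by ring,
    show z + (Real.pi:ℂ) + Complex.I*δ = (z + Complex.I*δ) + Real.pi by ring,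
    cot_add_pi', cot_add_pi']

lemma Kker_neg (δ : ℝ) (z : ℂ) : Kker δ (-z) = Kker δ z := by
  unfold Kker
  rw [show -z - Complex.I*δ = -(z + Complex.I*δ) by ring,
    show -z + Complex.I*δ = -(z - Complex.I*δ) by ring, cot_neg', cot_neg']
  ring

lemma cot_eq_exp {z : ℂ} (h : Complex.exp (2*Complex.I*z) ≠ 1) :
    Complex.cot z = -Complex.I
      - 2*Complex.I*Complex.exp (2*Complex.I*z) / (1 - Complex.exp (2*Complex.I*z)) := by
  have he : Complex.exp (z*Complex.I) ≠ 0 := Complex.exp_ne_zero _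
  have h2 : Complex.exp (2*Complex.I*z) = Complex.exp (z*Complex.I) * Complex.exp (z*Complex.I) := by
    rw [← Complex.exp_add]; ring_nf
  have hne : Complex.exp (-z*Complex.I) = (Complex.exp (z*Complex.I))⁻¹ := by
    rw [← Complex.exp_neg]; ring_nf
  rw [Complex.cot, Complex.sin, Complex.cos, hne, h2]
  set w := Complex.exp (z*Complex.I) with hw
  have h1 : 1 - w * w ≠ 0 := by rw [← h2]; exact sub_ne_zero.mpr (Ne.symm h)
  have hd : w⁻¹ - w ≠ 0 := by
    intro hc
    apply h1
    have hcc : w⁻¹ = w := sub_eq_zero.mp hc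
    have : w * w = 1 := by nth_rewrite 1 [← hcc]; exact inv_mul_cancel₀ he
    rw [this, sub_self]
  have hI : Complex.I ≠ 0 := Complex.I_ne_zero
  have h1' : 1 - w ^ 2 ≠ 0 := by rw [sq]; exact h1
  field_simp
  linear_combination (1 + w^2) * Complex.I_sq

/-! ### The antiderivative of `cot` in the upper half plane -/

lemma exp_abs_lt {z : ℂ} (h : 0 < z.im) : ‖Complex.exp (2*Complex.I*z)‖ < 1 := by
  rw [Complex.norm_exp, Real.exp_lt_one_iff]
  have : (2*Complex.I*z).re = -2*z.im := by
    simp [Complex.mul_re, Complex.mul_im]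
  rw [this]; linarith

lemma exp_ne_one {z : ℂ} (h : 0 < z.im) : Complex.exp (2*Complex.I*z) ≠ 1 := by
  intro hc
  have := exp_abs_lt h
  rw [hc] at this
  simp at this

lemma one_sub_exp_slit {z : ℂ} (h : 0 < z.im) :
    1 - Complex.exp (2*Complex.I*z) ∈ Complex.slitPlane := by
  rw [Complex.mem_slitPlane_iff]
  left
  have h1 := exp_abs_lt h
  have h2 : (Complex.exp (2*Complex.I*z)).re ≤ ‖Complex.exp (2*Complex.I*z)‖ :=
    Complex.re_le_norm _
  simp only [Complex.sub_re, Complex.one_re]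
  linarith

lemma hasDerivAt_G {z : ℂ} (h : 0 < z.im) :
    HasDerivAt (fun w => -Complex.I*w + Complex.log (1 - Complex.exp (2*Complex.I*w)))
      (Complex.cot z) z := by
  have h1 : HasDerivAt (fun w : ℂ => -Complex.I*w) (-Complex.I) z := by
    simpa using (hasDerivAt_id z).const_mul (-Complex.I)
  have h2 : HasDerivAt (fun w : ℂ => 1 - Complex.exp (2*Complex.I*w))
      (-(Complex.exp (2*Complex.I*z) * (2*Complex.I))) z := by
    have : HasDerivAt (fun w : ℂ => 2*Complex.I*w) (2*Complex.I) z := by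
      simpa using (hasDerivAt_id z).const_mul (2*Complex.I)
    exact (this.cexp).const_sub 1
  have h3 := h2.clog (one_sub_exp_slit h)
  have h4 := h1.add h3
  refine h4.congr_deriv ?_; symm
  rw [cot_eq_exp (exp_ne_one h)]
  rw [neg_div]
  ring

/-! ### Continuity lemmas -/

lemma cont_cot_comp {p : ℝ → ℂ} (hp : Continuous p) (hs : ∀ t, Complex.sin (p t) ≠ 0) :
    Continuous fun t => Complex.cot (p t) := by
  simp only [Complex.cot]
  exact (Complex.continuous_cos.comp hp).div (Complex.continuous_sin.comp hp) hs

lemma cont_path_horiz (c : ℝ) : Continuous fun u : ℝ => (u:ℂ) + Complex.I*(c:ℂ) :=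
  Complex.continuous_ofReal.add continuous_const

lemma cont_cot_horiz {c : ℝ} (hc : c ≠ 0) :
    Continuous fun u : ℝ => Complex.cot ((u:ℂ) + Complex.I*(c:ℂ)) := by
  refine cont_cot_comp (cont_path_horiz c) fun t => sin_ne_zero_of_im' ?_
  simp [hc]

lemma cont_Kker_horiz {δ y : ℝ} (h1 : y ≠ δ) (h2 : y ≠ -δ) :
    Continuous fun u : ℝ => Kker δ ((u:ℂ) + Complex.I*(y:ℂ)) := by
  unfold Kker
  refine continuous_const.mul (Continuous.sub ?_ ?_)
  · refine cont_cot_comp ((cont_path_horiz y).sub continuous_const) fun t => sin_ne_zero_of_im' ?_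
    simp [sub_ne_zero.mpr h1]
  · refine cont_cot_comp ((cont_path_horiz y).add continuous_const) fun t => sin_ne_zero_of_im' ?_
    simpa using fun hc => h2 (by linarith)

lemma cont_Kker_vert (δ : ℝ) :
    Continuous fun t : ℝ => Kker δ (((-(Real.pi/2) : ℝ):ℂ) + Complex.I*(t:ℂ)) := by
  unfold Kker
  have hp : Continuous fun t : ℝ => ((-(Real.pi/2) : ℝ):ℂ) + Complex.I*(t:ℂ) :=
    continuous_const.add (continuous_const.mul Complex.continuous_ofReal)
  refine continuous_const.mul (Continuous.sub ?_ ?_)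
  · refine cont_cot_comp (hp.sub continuous_const) fun t => sin_ne_zero_of_re_half' ?_
    simp
  · refine cont_cot_comp (hp.add continuous_const) fun t => sin_ne_zero_of_re_half' ?_
    simp

/-! ### The period integral of `cot` and of `K` -/

lemma cot_integral_pos {c : ℝ} (hc : 0 < c) :
    ∫ u in (0:ℝ)..Real.pi, Complex.cot ((u:ℂ) + Complex.I*(c:ℂ)) = -Real.pi * Complex.I := by
  set F : ℝ → ℂ := fun t =>
    -Complex.I*((t:ℂ) + Complex.I*c)
      + Complex.log (1 - Complex.exp (2*Complex.I*((t:ℂ) + Complex.I*c))) with hF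
  have key : ∀ u ∈ Set.uIcc (0:ℝ) Real.pi,
      HasDerivAt F (Complex.cot ((u:ℂ) + Complex.I*(c:ℂ))) u := by
    intro u _
    have him : ((u:ℂ) + Complex.I*(c:ℂ)).im = c := by simp
    have hG := hasDerivAt_G (z := (u:ℂ) + Complex.I*(c:ℂ)) (by rw [him]; exact hc)
    have hshift : HasDerivAt (fun w : ℂ =>
        -Complex.I*(w + Complex.I*c)
          + Complex.log (1 - Complex.exp (2*Complex.I*(w + Complex.I*c))))
        (Complex.cot ((u:ℂ) + Complex.I*(c:ℂ))) (u:ℂ) := by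
      have := hG.comp (u:ℂ) ((hasDerivAt_id (u:ℂ)).add_const (Complex.I*(c:ℂ)))
      simpa [Function.comp_def] using this
    exact hshift.comp_ofReal
  have hint : IntervalIntegrable (fun u : ℝ => Complex.cot ((u:ℂ) + Complex.I*(c:ℂ)))
      MeasureTheory.volume 0 Real.pi := (cont_cot_horiz hc.ne').intervalIntegrable _ _
  rw [intervalIntegral.integral_eq_sub_of_hasDerivAt key hint]
  have hexp : Complex.exp (2*Complex.I*(((Real.pi:ℝ):ℂ) + Complex.I*c))
      = Complex.exp (2*Complex.I*(((0:ℝ):ℂ) + Complex.I*c)) := by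
    rw [show 2*Complex.I*(((Real.pi:ℝ):ℂ) + Complex.I*c)
        = 2*(Real.pi:ℂ)*Complex.I + 2*Complex.I*(((0:ℝ):ℂ) + Complex.I*c) by push_cast; ring]
    rw [Complex.exp_add, Complex.exp_two_pi_mul_I, one_mul]
  rw [hF]
  simp only [hexp]
  push_cast
  ring

lemma cot_integral_neg {c : ℝ} (hc : c < 0) :
    ∫ u in (0:ℝ)..Real.pi, Complex.cot ((u:ℂ) + Complex.I*(c:ℂ)) = Real.pi * Complex.I := by
  have e1 : ∀ u : ℝ, Complex.cot ((u:ℂ) + Complex.I*(c:ℂ))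
      = -Complex.cot (((Real.pi - u : ℝ):ℂ) + Complex.I*((-c:ℝ):ℂ)) := by
    intro u
    rw [show (((Real.pi - u : ℝ):ℂ) + Complex.I*((-c:ℝ):ℂ))
        = -((u:ℂ) + Complex.I*(c:ℂ)) + Real.pi by push_cast; ring, cot_add_pi', cot_neg', neg_neg]
  simp_rw [e1]
  rw [intervalIntegral.integral_neg]
  have e2 : (∫ u in (0:ℝ)..Real.pi, Complex.cot (((Real.pi - u : ℝ):ℂ) + Complex.I*((-c:ℝ):ℂ)))
      = ∫ u in (0:ℝ)..Real.pi, Complex.cot (((u:ℝ):ℂ) + Complex.I*((-c:ℝ):ℂ)) := by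
    have := intervalIntegral.integral_comp_sub_left
      (a := (0:ℝ)) (b := Real.pi)
      (fun u : ℝ => Complex.cot (((u:ℝ):ℂ) + Complex.I*((-c:ℝ):ℂ))) Real.pi
    simpa using this
  rw [e2, cot_integral_pos (by linarith : (0:ℝ) < -c)]
  ring

lemma cot_integral {c : ℝ} (hc : c ≠ 0) :
    ∫ u in (0:ℝ)..Real.pi, Complex.cot ((u:ℂ) + Complex.I*(c:ℂ))
      = if 0 < c then -Real.pi * Complex.I else Real.pi * Complex.I := by
  rcases lt_or_gt_of_ne hc with h | h
  · rw [if_neg (not_lt.mpr h.le), cot_integral_neg h]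
  · rw [if_pos h, cot_integral_pos h]

lemma Kker_horiz_eq (δ y : ℝ) (u : ℝ) :
    Kker δ ((u:ℂ) + Complex.I*(y:ℂ))
      = (1 / (2 * (Real.pi : ℂ) * Complex.I)) *
        (Complex.cot ((u:ℂ) + Complex.I*((y-δ:ℝ):ℂ))
          - Complex.cot ((u:ℂ) + Complex.I*((y+δ:ℝ):ℂ))) := by
  unfold Kker
  rw [show ((u:ℂ) + Complex.I*(y:ℂ)) - Complex.I*(δ:ℂ)
      = (u:ℂ) + Complex.I*((y-δ:ℝ):ℂ) by push_cast; ring,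
    show ((u:ℂ) + Complex.I*(y:ℂ)) + Complex.I*(δ:ℂ)
      = (u:ℂ) + Complex.I*((y+δ:ℝ):ℂ) by push_cast; ring]

lemma Kker_integral {δ y : ℝ} (hδ : 0 < δ) (h1 : y ≠ δ) (h2 : y ≠ -δ) :
    ∫ u in (0:ℝ)..Real.pi, Kker δ ((u:ℂ) + Complex.I*(y:ℂ)) = if |y| < δ then 1 else 0 := by
  have hm : y - δ ≠ 0 := sub_ne_zero.mpr h1
  have hp : y + δ ≠ 0 := fun hc => h2 (by linarith [hc])
  simp_rw [Kker_horiz_eq δ y]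
  rw [intervalIntegral.integral_const_mul,
    intervalIntegral.integral_sub ((cont_cot_horiz hm).intervalIntegrable _ _)
      ((cont_cot_horiz hp).intervalIntegrable _ _),
    cot_integral hm, cot_integral hp]
  have hπ : (Real.pi : ℂ) ≠ 0 := Complex.ofReal_ne_zero.mpr Real.pi_ne_zero
  by_cases hlt : |y| < δ
  · rw [if_pos hlt]
    obtain ⟨ha, hb⟩ := abs_lt.mp hlt
    rw [if_neg (by linarith), if_pos (by linarith)]
    field_simp
    ring
  · rw [if_neg hlt]
    push_neg at hlt
    by_cases hy : 0 < y - δ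
    · rw [if_pos hy, if_pos (by linarith)]
      ring
    · have h3 : y < δ := by
        push_neg at hy
        rcases lt_or_eq_of_le hy with h | h
        · linarith
        · exact absurd (by linarith) h1
      have h4 : y + δ ≤ 0 := by
        rcases abs_cases y with ⟨he, _⟩ | ⟨he, _⟩
        · rw [he] at hlt; linarith
        · rw [he] at hlt; linarith
      rw [if_neg hy, if_neg (by linarith)]
      ring

lemma Kker_periodic (δ y : ℝ) :
    Function.Periodic (fun u : ℝ => Kker δ ((u:ℂ) + Complex.I*(y:ℂ))) Real.pi := by
  intro u
  simp only
  rw [show (((u+Real.pi:ℝ)):ℂ) + Complex.I*(y:ℂ)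
      = ((u:ℂ) + Complex.I*(y:ℂ)) + (Real.pi:ℂ) by push_cast; ring, Kker_add_pi]

lemma Kker_integral_period {δ y : ℝ} (hδ : 0 < δ) (h1 : y ≠ δ) (h2 : y ≠ -δ) (a : ℝ) :
    ∫ u in a..(a+Real.pi), Kker δ ((u:ℂ) + Complex.I*(y:ℂ)) = if |y| < δ then 1 else 0 := by
  rw [(Kker_periodic δ y).intervalIntegral_add_eq a 0, zero_add, Kker_integral hδ h1 h2]

/-! ### Behaviour of `θ` -/

lemma theta_add_pi {δ : ℝ} (hδ : 0 < δ) {x : ℂ} (h1 : x.im ≠ δ) (h2 : x.im ≠ -δ) :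
    thetaFn δ (x + (Real.pi:ℂ))
      = thetaFn δ x + 2*(Real.pi:ℂ)*Complex.I * (if |x.im| < δ then 1 else 0) := by
  unfold thetaFn
  have him : (x + (Real.pi:ℂ)).im = x.im := by simp
  have hre : (x + (Real.pi:ℂ)).re = x.re + Real.pi := by simp
  rw [him, hre]
  have hsplit : (∫ u in (-(Real.pi/2):ℝ)..(x.re + Real.pi), Kker δ ((u:ℂ) + Complex.I*(x.im:ℂ)))
      = (∫ u in (-(Real.pi/2):ℝ)..x.re, Kker δ ((u:ℂ) + Complex.I*(x.im:ℂ)))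
        + ∫ u in x.re..(x.re+Real.pi), Kker δ ((u:ℂ) + Complex.I*(x.im:ℂ)) :=
    (intervalIntegral.integral_add_adjacent_intervals
      ((cont_Kker_horiz h1 h2).intervalIntegrable _ _)
      ((cont_Kker_horiz h1 h2).intervalIntegrable _ _)).symm
  rw [hsplit, Kker_integral_period hδ h1 h2 x.re]
  ring

lemma theta_neg_eq {δ : ℝ} (hδ : 0 < δ) {x : ℂ} (h1 : x.im ≠ δ) (h2 : x.im ≠ -δ) :
    thetaFn δ (-x)
      = -thetaFn δ x + 2*(Real.pi:ℂ)*Complex.I * (if |x.im| < δ then 1 else 0) := by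
  unfold thetaFn
  rw [Complex.neg_im, Complex.neg_re]
  -- vertical leg is odd
  have heven : ∀ t : ℝ, Kker δ (((-(Real.pi/2):ℝ):ℂ) + Complex.I*(((-t:ℝ)):ℂ))
      = Kker δ (((-(Real.pi/2):ℝ):ℂ) + Complex.I*(t:ℂ)) := by
    intro t
    rw [show (((-(Real.pi/2):ℝ):ℂ) + Complex.I*(((-t:ℝ)):ℂ))
        = -((((-(Real.pi/2):ℝ):ℂ) + Complex.I*(t:ℂ)) + (Real.pi:ℂ)) by
          push_cast; ring]
    rw [Kker_neg, Kker_add_pi]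
  have hV : (∫ t in (0:ℝ)..(-x.im), Kker δ (((-(Real.pi/2):ℝ):ℂ) + Complex.I*(t:ℂ)))
      = -∫ t in (0:ℝ)..x.im, Kker δ (((-(Real.pi/2):ℝ):ℂ) + Complex.I*(t:ℂ)) := by
    have hcn := intervalIntegral.integral_comp_neg (a := (0:ℝ)) (b := -x.im)
      (fun t : ℝ => Kker δ (((-(Real.pi/2):ℝ):ℂ) + Complex.I*(t:ℂ)))
    simp only [heven] at hcn
    rw [hcn, neg_zero, intervalIntegral.integral_symm, neg_neg]
  -- horizontal integrand reflection
  have heven2 : ∀ u : ℝ, Kker δ (((-u:ℝ):ℂ) + Complex.I*(x.im:ℂ))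
      = Kker δ ((u:ℂ) + Complex.I*((-x.im:ℝ):ℂ)) := by
    intro u
    rw [show (((-u:ℝ):ℂ) + Complex.I*(x.im:ℂ))
        = -((u:ℂ) + Complex.I*((-x.im:ℝ):ℂ)) by push_cast; ring, Kker_neg]
  have hH : (∫ u in (-(Real.pi/2):ℝ)..(-x.re), Kker δ ((u:ℂ) + Complex.I*((-x.im:ℝ):ℂ)))
      = ∫ u in x.re..(Real.pi/2), Kker δ ((u:ℂ) + Complex.I*(x.im:ℂ)) := by
    have hcn := intervalIntegral.integral_comp_neg (a := (-(Real.pi/2):ℝ)) (b := -x.re)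
      (fun u : ℝ => Kker δ ((u:ℂ) + Complex.I*(x.im:ℂ)))
    simp only [heven2] at hcn
    rw [hcn]
    norm_num
  rw [hV, hH]
  have hsum := intervalIntegral.integral_add_adjacent_intervals
      (a := (-(Real.pi/2):ℝ)) (b := x.re) (c := (Real.pi/2:ℝ)) (μ := MeasureTheory.volume)
      (f := fun u : ℝ => Kker δ ((u:ℂ) + Complex.I*(x.im:ℂ)))
      ((cont_Kker_horiz h1 h2).intervalIntegrable _ _)
      ((cont_Kker_horiz h1 h2).intervalIntegrable _ _)
  have hval : (∫ u in (-(Real.pi/2):ℝ)..(Real.pi/2), Kker δ ((u:ℂ) + Complex.I*(x.im:ℂ)))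
      = if |x.im| < δ then 1 else 0 := by
    have := Kker_integral_period hδ h1 h2 (-(Real.pi/2))
    rwa [show -(Real.pi/2) + Real.pi = Real.pi/2 by ring] at this
  linear_combination (2*(Real.pi:ℂ)*Complex.I) * (hsum.trans hval)

lemma theta_pi_half {δ : ℝ} (hδ : 0 < δ) :
    thetaFn δ ((Real.pi / 2 : ℝ) : ℂ) = 2 * Real.pi * Complex.I := by
  unfold thetaFn
  rw [Complex.ofReal_im, Complex.ofReal_re]
  rw [intervalIntegral.integral_same]
  have hval := Kker_integral_period hδ (show (0:ℝ) ≠ δ by exact fun h => absurd h.symm hδ.ne')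
    (show (0:ℝ) ≠ -δ by intro h; linarith) (-(Real.pi/2))
  rw [show -(Real.pi/2) + Real.pi = Real.pi/2 by ring, if_pos (by simpa using hδ)] at hval
  rw [hval]
  ring

lemma theta_zero {δ : ℝ} (hδ : 0 < δ) :
    thetaFn δ 0 = Real.pi * Complex.I := by
  unfold thetaFn
  rw [Complex.zero_im, Complex.zero_re]
  rw [intervalIntegral.integral_same]
  have heven : ∀ u : ℝ, Kker δ (((-u:ℝ):ℂ) + Complex.I*((0:ℝ):ℂ))
      = Kker δ ((u:ℂ) + Complex.I*((0:ℝ):ℂ)) := by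
    intro u
    rw [show (((-u:ℝ):ℂ) + Complex.I*((0:ℝ):ℂ))
        = -((u:ℂ) + Complex.I*((0:ℝ):ℂ)) by push_cast; ring, Kker_neg]
  have h1 : (0:ℝ) ≠ δ := fun h => absurd h.symm hδ.ne'
  have h2 : (0:ℝ) ≠ -δ := by intro h; linarith
  have hrefl : (∫ u in (-(Real.pi/2):ℝ)..(0:ℝ), Kker δ ((u:ℂ) + Complex.I*((0:ℝ):ℂ)))
      = ∫ u in (0:ℝ)..(Real.pi/2:ℝ), Kker δ ((u:ℂ) + Complex.I*((0:ℝ):ℂ)) := by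
    have hcn := intervalIntegral.integral_comp_neg (a := (0:ℝ)) (b := (Real.pi/2:ℝ))
      (fun u : ℝ => Kker δ ((u:ℂ) + Complex.I*((0:ℝ):ℂ)))
    simp only [heven] at hcn
    rw [neg_zero] at hcn
    exact hcn.symm
  have hsum := intervalIntegral.integral_add_adjacent_intervals
      (a := (-(Real.pi/2):ℝ)) (b := (0:ℝ)) (c := (Real.pi/2:ℝ)) (μ := MeasureTheory.volume)
      (f := fun u : ℝ => Kker δ ((u:ℂ) + Complex.I*((0:ℝ):ℂ)))
      ((cont_Kker_horiz h1 h2).intervalIntegrable _ _)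
      ((cont_Kker_horiz h1 h2).intervalIntegrable _ _)
  have hval := Kker_integral_period hδ h1 h2 (-(Real.pi/2))
  rw [show -(Real.pi/2) + Real.pi = Real.pi/2 by ring, if_pos (by simpa using hδ)] at hval
  rw [← hrefl] at hsum
  rw [hval] at hsum
  have hhalf : (∫ u in (-(Real.pi/2):ℝ)..(0:ℝ), Kker δ ((u:ℂ) + Complex.I*((0:ℝ):ℂ)))
      = 1/2 := by
    have h2' := hsum
    linear_combination (1/2 : ℂ) * hsum
  rw [hhalf]
  ring

/-- Quasi-periodicity and parity of `θ(·|δ)`, and special values `θ(π/2|δ) = 2πi`,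
`θ(0|δ) = πi`. -/
theorem theta_quasiperiodicity_parity_values (δ : ℝ) (hδ : 0 < δ) :
    (∀ x : ℂ, x ∈ Ddom δ → x + (Real.pi : ℂ) ∈ Ddom δ →
      (|x.im| < δ → thetaFn δ (x + (Real.pi : ℂ)) = thetaFn δ x + 2 * Real.pi * Complex.I) ∧
      (δ < |x.im| → thetaFn δ (x + (Real.pi : ℂ)) = thetaFn δ x)) ∧
    (∀ x : ℂ, x ∈ Ddom δ → -x ∈ Ddom δ →
      (|x.im| < δ → thetaFn δ (-x) = -thetaFn δ x + 2 * Real.pi * Complex.I) ∧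
      (δ < |x.im| → thetaFn δ (-x) = -thetaFn δ x)) ∧
    thetaFn δ ((Real.pi / 2 : ℝ) : ℂ) = 2 * Real.pi * Complex.I ∧
    thetaFn δ 0 = Real.pi * Complex.I := by
  have hne : ∀ {y : ℝ}, |y| ≠ δ → y ≠ δ ∧ y ≠ -δ := by
    intro y h
    constructor
    · rintro rfl; exact h (abs_of_pos hδ)
    · rintro rfl; rw [abs_neg, abs_of_pos hδ] at h; exact h rfl
  refine ⟨fun x _ _ => ⟨fun hlt => ?_, fun hgt => ?_⟩,
    fun x _ _ => ⟨fun hlt => ?_, fun hgt => ?_⟩, theta_pi_half hδ, theta_zero hδ⟩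
  · obtain ⟨h1, h2⟩ := hne hlt.ne
    rw [theta_add_pi hδ h1 h2, if_pos hlt]; ring
  · obtain ⟨h1, h2⟩ := hne hgt.ne'
    rw [theta_add_pi hδ h1 h2, if_neg (not_lt.mpr hgt.le)]; ring
  · obtain ⟨h1, h2⟩ := hne hlt.ne
    rw [theta_neg_eq hδ h1 h2, if_pos hlt]; ring
  · obtain ⟨h1, h2⟩ := hne hgt.ne'
    rw [theta_neg_eq hδ h1 h2, if_neg (not_lt.mpr hgt.le)]; ring
end

section
/- For every δ > 0 and every real u, the limits lim_{v→+∞} θ(u + iv|δ) = −2δ and lim_{v→−∞} θ(u + iv|δ) = 2δ hold. -/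
open Complex Real Filter


lemma cot_vertical (y : ℝ) :
    Complex.cot (((-(Real.pi/2) : ℝ) : ℂ) + Complex.I * y) = -Complex.I * Real.tanh y := by
  have hc : Complex.cos ((((-(Real.pi/2) : ℝ)) : ℂ) + Complex.I * y)
      = (Real.sinh y : ℂ) * Complex.I := by
    rw [show Complex.I * (y:ℂ) = (y:ℂ) * Complex.I by ring, Complex.cos_add,
      Complex.cos_mul_I, Complex.sin_mul_I, ← Complex.ofReal_cos, ← Complex.ofReal_sin,
      ← Complex.ofReal_cosh, ← Complex.ofReal_sinh]
    rw [Real.cos_neg, Real.cos_pi_div_two, Real.sin_neg, Real.sin_pi_div_two]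
    push_cast
    ring
  have hs : Complex.sin ((((-(Real.pi/2) : ℝ)) : ℂ) + Complex.I * y)
      = -(Real.cosh y : ℂ) := by
    rw [show Complex.I * (y:ℂ) = (y:ℂ) * Complex.I by ring, Complex.sin_add,
      Complex.cos_mul_I, Complex.sin_mul_I, ← Complex.ofReal_cos, ← Complex.ofReal_sin,
      ← Complex.ofReal_cosh, ← Complex.ofReal_sinh]
    rw [Real.cos_neg, Real.cos_pi_div_two, Real.sin_neg, Real.sin_pi_div_two]
    push_cast
    ring
  have hcosh : (Real.cosh y : ℂ) ≠ 0 := by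
    exact_mod_cast (Real.cosh_pos (x := y)).ne'
  rw [Complex.cot, hc, hs, Real.tanh_eq_sinh_div_cosh]
  push_cast
  field_simp

lemma Kker_vertical (δ t : ℝ) :
    Kker δ (((-(Real.pi/2) : ℝ) : ℂ) + Complex.I * t)
      = (((Real.tanh (t+δ) - Real.tanh (t-δ)) / (2*Real.pi)) : ℝ) := by
  have h1 : (((-(Real.pi/2) : ℝ) : ℂ) + Complex.I * t) - Complex.I * δ
      = ((-(Real.pi/2) : ℝ) : ℂ) + Complex.I * ((t - δ : ℝ) : ℂ) := by push_cast; ring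
  have h2 : (((-(Real.pi/2) : ℝ) : ℂ) + Complex.I * t) + Complex.I * δ
      = ((-(Real.pi/2) : ℝ) : ℂ) + Complex.I * ((t + δ : ℝ) : ℂ) := by push_cast; ring
  rw [Kker, h1, h2, cot_vertical, cot_vertical]
  have hπ : (Real.pi : ℂ) ≠ 0 := Complex.ofReal_ne_zero.mpr Real.pi_ne_zero
  push_cast
  field_simp
  ring_nf

lemma cot_add_I_bound (z : ℂ) (hz : 1 ≤ z.im) :
    ‖Complex.cot z + Complex.I‖ ≤ 4 * Real.exp (-2 * z.im) := by
  set e := Complex.exp (2 * Complex.I * z) with he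
  have habs : ‖e‖ = Real.exp (-2 * z.im) := by
    rw [he, Complex.norm_exp]
    congr 1
    simp [Complex.mul_re]
  have hsmall : ‖e‖ ≤ Real.exp (-2) := by
    rw [habs]; exact Real.exp_le_exp.mpr (by linarith)
  have hhalf : Real.exp (-2:ℝ) ≤ 1/2 := by
    have h1 : Real.exp (-2:ℝ) = 1 / Real.exp 2 := by
      rw [Real.exp_neg]; ring
    rw [h1]
    have h2 : (2:ℝ) ≤ Real.exp 2 := by
      have := Real.add_one_le_exp (2:ℝ); linarith
    rw [div_le_div_iff₀ (by linarith) (by norm_num)]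
    linarith
  have hne : (1:ℂ) - e ≠ 0 := by
    intro h
    have h1 : (1:ℂ) = e := by linear_combination h
    have : (1:ℝ) ≤ 1/2 := by
      calc (1:ℝ) = ‖(1:ℂ)‖ := by simp
        _ = ‖e‖ := by rw [h1]
        _ ≤ 1/2 := hsmall.trans hhalf
    linarith
  have key : Complex.cot z + Complex.I = 2 * e / (Complex.I * (1 - e)) := by
    rw [Complex.cot_eq_exp_ratio, ← he]
    field_simp
    linear_combination (1 - e) * Complex.I_sq
  rw [key, norm_div, norm_mul, norm_mul]
  have hd : (1:ℝ)/2 ≤ ‖1 - e‖ := by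
    have h2 : ‖(1:ℂ)‖ - ‖e‖ ≤ ‖1 - e‖ := norm_sub_norm_le _ _
    have h3 : ‖(1:ℂ)‖ = 1 := by simp
    linarith [hsmall.trans hhalf]
  have hIe : ‖Complex.I‖ * ‖1 - e‖ = ‖1-e‖ := by simp
  rw [hIe, div_le_iff₀ (by linarith)]
  have h2 : ‖(2:ℂ)‖ = 2 := by norm_num
  rw [h2, habs]
  nlinarith [Real.exp_pos (-2*z.im)]

lemma cot_sub_I_bound (z : ℂ) (hz : z.im ≤ -1) :
    ‖Complex.cot z - Complex.I‖ ≤ 4 * Real.exp (2 * z.im) := by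
  have hcn : Complex.cot (-z) = -Complex.cot z := by
    simp [Complex.cot, Complex.cos_neg, Complex.sin_neg, div_neg, neg_div]
  have h := cot_add_I_bound (-z) (by simp; linarith)
  rw [hcn] at h
  have : ‖Complex.cot z - Complex.I‖ = ‖-Complex.cot z + Complex.I‖ := by
    rw [← norm_neg]; congr 1; ring
  rw [this]
  simpa using h

lemma norm_Kker_const : ‖(1 / (2 * (Real.pi : ℂ) * Complex.I))‖ = 1 / (2 * Real.pi) := by
  rw [norm_div, norm_mul, norm_mul]
  simp [abs_of_pos Real.pi_pos]

lemma Kker_bound_top (δ v s : ℝ) (hδ : 0 < δ) (hv : δ + 1 ≤ v) :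
    ‖Kker δ ((s:ℂ) + Complex.I * v)‖ ≤ (4 / Real.pi) * Real.exp (-2 * (v - δ)) := by
  have h1 : ((s:ℂ) + Complex.I * v) - Complex.I * δ = (s:ℂ) + Complex.I * ((v - δ : ℝ) : ℂ) := by
    push_cast; ring
  have h2 : ((s:ℂ) + Complex.I * v) + Complex.I * δ = (s:ℂ) + Complex.I * ((v + δ : ℝ) : ℂ) := by
    push_cast; ring
  set z₁ : ℂ := (s:ℂ) + Complex.I * ((v - δ : ℝ) : ℂ)
  set z₂ : ℂ := (s:ℂ) + Complex.I * ((v + δ : ℝ) : ℂ)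
  have hz₁ : z₁.im = v - δ := by simp [z₁]
  have hz₂ : z₂.im = v + δ := by simp [z₂]
  have hb₁ := cot_add_I_bound z₁ (by rw [hz₁]; linarith)
  have hb₂ := cot_add_I_bound z₂ (by rw [hz₂]; linarith)
  rw [hz₁] at hb₁; rw [hz₂] at hb₂
  rw [Kker, h1, h2]
  have hdiff : Complex.cot z₁ - Complex.cot z₂
      = (Complex.cot z₁ + Complex.I) - (Complex.cot z₂ + Complex.I) := by ring
  rw [hdiff, norm_mul, norm_Kker_const]
  have hnorm : ‖(Complex.cot z₁ + Complex.I) - (Complex.cot z₂ + Complex.I)‖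
      ≤ 4 * Real.exp (-2 * (v - δ)) + 4 * Real.exp (-2 * (v + δ)) :=
    (norm_sub_le _ _).trans (add_le_add hb₁ hb₂)
  have hmono : Real.exp (-2 * (v + δ)) ≤ Real.exp (-2 * (v - δ)) :=
    Real.exp_le_exp.mpr (by linarith)
  have hπ := Real.pi_pos
  calc 1 / (2 * Real.pi) * ‖(Complex.cot z₁ + Complex.I) - (Complex.cot z₂ + Complex.I)‖
      ≤ 1 / (2 * Real.pi) * (8 * Real.exp (-2 * (v - δ))) := by
        apply mul_le_mul_of_nonneg_left _ (by positivity)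
        linarith
    _ = (4 / Real.pi) * Real.exp (-2 * (v - δ)) := by field_simp; ring

lemma Kker_bound_bot (δ v s : ℝ) (hδ : 0 < δ) (hv : v ≤ -(δ + 1)) :
    ‖Kker δ ((s:ℂ) + Complex.I * v)‖ ≤ (4 / Real.pi) * Real.exp (2 * (v + δ)) := by
  have h1 : ((s:ℂ) + Complex.I * v) - Complex.I * δ = (s:ℂ) + Complex.I * ((v - δ : ℝ) : ℂ) := by
    push_cast; ring
  have h2 : ((s:ℂ) + Complex.I * v) + Complex.I * δ = (s:ℂ) + Complex.I * ((v + δ : ℝ) : ℂ) := by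
    push_cast; ring
  set z₁ : ℂ := (s:ℂ) + Complex.I * ((v - δ : ℝ) : ℂ)
  set z₂ : ℂ := (s:ℂ) + Complex.I * ((v + δ : ℝ) : ℂ)
  have hz₁ : z₁.im = v - δ := by simp [z₁]
  have hz₂ : z₂.im = v + δ := by simp [z₂]
  have hb₁ := cot_sub_I_bound z₁ (by rw [hz₁]; linarith)
  have hb₂ := cot_sub_I_bound z₂ (by rw [hz₂]; linarith)
  rw [hz₁] at hb₁; rw [hz₂] at hb₂
  rw [Kker, h1, h2]
  have hdiff : Complex.cot z₁ - Complex.cot z₂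
      = (Complex.cot z₁ - Complex.I) - (Complex.cot z₂ - Complex.I) := by ring
  rw [hdiff, norm_mul, norm_Kker_const]
  have hnorm : ‖(Complex.cot z₁ - Complex.I) - (Complex.cot z₂ - Complex.I)‖
      ≤ 4 * Real.exp (2 * (v - δ)) + 4 * Real.exp (2 * (v + δ)) :=
    (norm_sub_le _ _).trans (add_le_add hb₁ hb₂)
  have hmono : Real.exp (2 * (v - δ)) ≤ Real.exp (2 * (v + δ)) :=
    Real.exp_le_exp.mpr (by linarith)
  have hπ := Real.pi_pos
  calc 1 / (2 * Real.pi) * ‖(Complex.cot z₁ - Complex.I) - (Complex.cot z₂ - Complex.I)‖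
      ≤ 1 / (2 * Real.pi) * (8 * Real.exp (2 * (v + δ))) := by
        apply mul_le_mul_of_nonneg_left _ (by positivity)
        linarith
    _ = (4 / Real.pi) * Real.exp (2 * (v + δ)) := by field_simp; ring

lemma logcosh_sub_tendsto :
    Tendsto (fun t : ℝ => Real.log (Real.cosh t) - t) atTop (nhds (-Real.log 2)) := by
  have heq : ∀ t : ℝ, Real.log (Real.cosh t) - t
      = Real.log ((1 + Real.exp (-(2*t)))/2) := by
    intro t
    have h1 : Real.cosh t / Real.exp t = (1 + Real.exp (-(2*t)))/2 := by
      rw [Real.cosh_eq, div_eq_div_iff (Real.exp_pos t).ne' two_ne_zero]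
      have : Real.exp (-(2*t)) * Real.exp t = Real.exp (-t) := by
        rw [← Real.exp_add]; ring_nf
      nlinarith [this]
    rw [← h1, Real.log_div (Real.cosh_pos t).ne' (Real.exp_ne_zero t), Real.log_exp]
  have hlim : Tendsto (fun t : ℝ => (1 + Real.exp (-(2*t)))/2) atTop (nhds (1/2)) := by
    have h2 : Tendsto (fun t : ℝ => Real.exp (-(2*t))) atTop (nhds 0) := by
      have hm : Tendsto (fun t : ℝ => -(2*t)) atTop atBot := by
        have h0 : Tendsto (fun t : ℝ => (2:ℝ)*t) atTop atTop :=
          tendsto_id.const_mul_atTop (two_pos : (0:ℝ) < 2)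
        exact tendsto_neg_atBot_iff.mpr h0
      exact Real.tendsto_exp_atBot.comp hm
    have := (h2.const_add 1).div_const 2
    simpa using this
  have hlog : Tendsto (fun t : ℝ => Real.log ((1 + Real.exp (-(2*t)))/2)) atTop
      (nhds (Real.log (1/2))) :=
    ((Real.continuousAt_log (by norm_num)).tendsto).comp hlim
  rw [show Real.log (1/2) = -Real.log 2 by rw [one_div, Real.log_inv]] at hlog
  exact hlog.congr (fun t => (heq t).symm)

lemma hasDerivAt_logcosh (δ t : ℝ) :
    HasDerivAt (fun t => Real.log (Real.cosh (t+δ)) - Real.log (Real.cosh (t-δ)))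
      (Real.tanh (t+δ) - Real.tanh (t-δ)) t := by
  have mk : ∀ c : ℝ, HasDerivAt (fun t => Real.log (Real.cosh (t+c))) (Real.tanh (t+c)) t := by
    intro c
    have hc : HasDerivAt (fun t : ℝ => Real.cosh (t+c)) (Real.sinh (t+c)) t := by
      have := (Real.hasDerivAt_cosh (t+c)).comp t ((hasDerivAt_id t).add_const c)
      rw [mul_one] at this; exact this
    have hl := (Real.hasDerivAt_log (Real.cosh_pos (t+c)).ne').comp t hc
    have heqd : (Real.cosh (t+c))⁻¹ * Real.sinh (t+c) = Real.tanh (t+c) := by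
      rw [Real.tanh_eq_sinh_div_cosh]; ring
    rw [← heqd]
    exact hl
  have h1 := mk δ
  have h2 : HasDerivAt (fun t => Real.log (Real.cosh (t-δ))) (Real.tanh (t-δ)) t := by
    have := mk (-δ)
    simpa [sub_eq_add_neg] using this
  exact h1.sub h2

lemma vert_integral (δ v : ℝ) :
    ∫ t in (0:ℝ)..v, (Real.tanh (t+δ) - Real.tanh (t-δ))
      = Real.log (Real.cosh (v+δ)) - Real.log (Real.cosh (v-δ)) := by
  have h := intervalIntegral.integral_eq_sub_of_hasDerivAt
    (f := fun t => Real.log (Real.cosh (t+δ)) - Real.log (Real.cosh (t-δ)))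
    (a := (0:ℝ)) (b := v)
    (fun t _ => hasDerivAt_logcosh δ t)
    (by
      apply Continuous.intervalIntegrable
      have ctanh : Continuous Real.tanh := by
        have he : Real.tanh = fun x => Real.sinh x / Real.cosh x :=
          funext fun x => Real.tanh_eq_sinh_div_cosh x
        rw [he]
        exact Real.continuous_sinh.div Real.continuous_cosh fun x => (Real.cosh_pos x).ne'
      exact (ctanh.comp (continuous_id.add continuous_const)).sub
        (ctanh.comp (continuous_id.sub continuous_const)))
  rw [h]
  simp [Real.cosh_neg]

lemma theta_eq (δ u v : ℝ) :
    thetaFn δ ((u : ℂ) + Complex.I * (v : ℂ))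
      = -(((Real.log (Real.cosh (v+δ)) - Real.log (Real.cosh (v-δ))) : ℝ) : ℂ)
        + 2 * (Real.pi : ℂ) * Complex.I *
          ∫ s in (-(Real.pi/2) : ℝ)..u, Kker δ ((s:ℂ) + Complex.I * (v:ℂ)) := by
  have him : ((u : ℂ) + Complex.I * (v : ℂ)).im = v := by simp
  have hre : ((u : ℂ) + Complex.I * (v : ℂ)).re = u := by simp
  rw [thetaFn, him, hre]
  have hvert : (∫ t in (0:ℝ)..v, Kker δ (((-(Real.pi/2) : ℝ)) + Complex.I * (t : ℂ)))
      = (((Real.log (Real.cosh (v+δ)) - Real.log (Real.cosh (v-δ))) / (2*Real.pi) : ℝ) : ℂ) := by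
    rw [intervalIntegral.integral_congr (g := fun t : ℝ =>
        ((((Real.tanh (t+δ) - Real.tanh (t-δ)) / (2*Real.pi)) : ℝ) : ℂ))
      (fun t _ => Kker_vertical δ t)]
    rw [intervalIntegral.integral_ofReal]
    norm_cast
    rw [intervalIntegral.integral_div, vert_integral]
  rw [hvert]
  have hπ : (Real.pi : ℂ) ≠ 0 := Complex.ofReal_ne_zero.mpr Real.pi_ne_zero
  set A : ℝ := Real.log (Real.cosh (v+δ)) - Real.log (Real.cosh (v-δ))
  set H : ℂ := ∫ s in (-(Real.pi/2) : ℝ)..u, Kker δ ((s:ℂ) + Complex.I * (v:ℂ))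
  push_cast
  field_simp
  ring_nf
  simp only [Complex.I_sq]
  ring

/-- Asymptotics of `θ`: `θ(u + iv|δ) → ∓2δ` as `v → ±∞`. -/
theorem theta_asymptotics (δ : ℝ) (hδ : 0 < δ) (u : ℝ) :
    Filter.Tendsto (fun v : ℝ => thetaFn δ ((u : ℂ) + Complex.I * (v : ℂ)))
      Filter.atTop (nhds ((-(2 * δ) : ℝ) : ℂ)) ∧
    Filter.Tendsto (fun v : ℝ => thetaFn δ ((u : ℂ) + Complex.I * (v : ℂ)))
      Filter.atBot (nhds (((2 * δ) : ℝ) : ℂ)) := by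
  have hg := logcosh_sub_tendsto
  have hL : ∀ x : ℝ, 0 < Real.cosh x := Real.cosh_pos
  -- the vertical limit function
  have hFtop : Tendsto (fun v : ℝ => Real.log (Real.cosh (v+δ)) - Real.log (Real.cosh (v-δ)))
      atTop (nhds (2*δ)) := by
    have t1 : Tendsto (fun v : ℝ => v + δ) atTop atTop :=
      tendsto_atTop_add_const_right atTop δ tendsto_id
    have t2 : Tendsto (fun v : ℝ => v - δ) atTop atTop :=
      tendsto_atTop_add_const_right atTop (-δ) tendsto_id
    have h1 := ((hg.comp t1).sub (hg.comp t2)).add_const (2*δ)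
    have h2 : Tendsto (fun v : ℝ => Real.log (Real.cosh (v+δ)) - Real.log (Real.cosh (v-δ)))
        atTop (nhds (-Real.log 2 - -Real.log 2 + 2*δ)) :=
      h1.congr (fun v : ℝ => by simp only [Function.comp]; ring)
    simpa using h2
  have hFbot : Tendsto (fun v : ℝ => Real.log (Real.cosh (v+δ)) - Real.log (Real.cosh (v-δ)))
      atBot (nhds (-(2*δ))) := by
    have t1 : Tendsto (fun v : ℝ => -v - δ) atBot atTop :=
      tendsto_atTop_add_const_right atBot (-δ) tendsto_neg_atBot_atTop
    have t2 : Tendsto (fun v : ℝ => -v + δ) atBot atTop :=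
      tendsto_atTop_add_const_right atBot δ tendsto_neg_atBot_atTop
    have h1 := ((hg.comp t1).sub (hg.comp t2)).add_const (-(2*δ))
    have h2 : Tendsto (fun v : ℝ => Real.log (Real.cosh (v+δ)) - Real.log (Real.cosh (v-δ)))
        atBot (nhds (-Real.log 2 - -Real.log 2 + -(2*δ))) :=
      h1.congr (fun v : ℝ => by
        simp only [Function.comp]
        have e1 : Real.cosh (-v-δ) = Real.cosh (v+δ) := by
          rw [show -v-δ = -(v+δ) by ring, Real.cosh_neg]
        have e2 : Real.cosh (-v+δ) = Real.cosh (v-δ) := by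
          rw [show -v+δ = -(v-δ) by ring, Real.cosh_neg]
        rw [e1, e2]; ring)
    simpa using h2
  -- horizontal integral tends to zero
  have hnc : ‖2 * (Real.pi:ℂ) * Complex.I‖ = 2 * Real.pi := by
    simp [abs_of_pos Real.pi_pos]
  have hHtop : Tendsto (fun v : ℝ => 2 * (Real.pi:ℂ) * Complex.I *
      ∫ s in (-(Real.pi/2) : ℝ)..u, Kker δ ((s:ℂ) + Complex.I * (v:ℂ))) atTop (nhds 0) := by
    rw [tendsto_zero_iff_norm_tendsto_zero]
    apply squeeze_zero' (Filter.Eventually.of_forall fun v => norm_nonneg _)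
      (g := fun v : ℝ => (2*Real.pi) * ((4 / Real.pi) * Real.exp (-2 * (v - δ)) * |u - (-(Real.pi/2))|))
    · filter_upwards [eventually_ge_atTop (δ+1)] with v hv
      rw [norm_mul, hnc]
      apply mul_le_mul_of_nonneg_left _ (by positivity)
      exact intervalIntegral.norm_integral_le_of_norm_le_const
        (fun s _ => Kker_bound_top δ v s hδ hv)
    · have hm2 : Tendsto (fun v : ℝ => -2 * (v - δ)) atTop atBot := by
        have ha : Tendsto (fun v : ℝ => 2*(v - δ)) atTop atTop :=
          (tendsto_atTop_add_const_right atTop (-δ) tendsto_id).const_mul_atTop two_pos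
        have := tendsto_neg_atBot_iff.mpr ha
        exact this.congr (fun v => by ring)
      have he : Tendsto (fun v : ℝ => Real.exp (-2 * (v - δ))) atTop (nhds 0) :=
        Real.tendsto_exp_atBot.comp hm2
      have hA : Tendsto (fun v : ℝ => (2*Real.pi) * ((4 / Real.pi) * Real.exp (-2 * (v - δ))
          * |u - (-(Real.pi/2))|)) atTop
          (nhds ((2*Real.pi) * (4/Real.pi) * |u - (-(Real.pi/2))| * 0)) :=
        (he.const_mul ((2*Real.pi) * (4/Real.pi) * |u - (-(Real.pi/2))|)).congr
          (fun v => by ring)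
      simpa using hA
  have hHbot : Tendsto (fun v : ℝ => 2 * (Real.pi:ℂ) * Complex.I *
      ∫ s in (-(Real.pi/2) : ℝ)..u, Kker δ ((s:ℂ) + Complex.I * (v:ℂ))) atBot (nhds 0) := by
    rw [tendsto_zero_iff_norm_tendsto_zero]
    apply squeeze_zero' (Filter.Eventually.of_forall fun v => norm_nonneg _)
      (g := fun v : ℝ => (2*Real.pi) * ((4 / Real.pi) * Real.exp (2 * (v + δ)) * |u - (-(Real.pi/2))|))
    · filter_upwards [eventually_le_atBot (-(δ+1))] with v hv
      rw [norm_mul, hnc]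
      apply mul_le_mul_of_nonneg_left _ (by positivity)
      exact intervalIntegral.norm_integral_le_of_norm_le_const
        (fun s _ => Kker_bound_bot δ v s hδ hv)
    · have hm2 : Tendsto (fun v : ℝ => 2 * (v + δ)) atBot atBot := by
        have ha : Tendsto (fun v : ℝ => v + δ) atBot atBot :=
          tendsto_atBot_add_const_right atBot δ tendsto_id
        exact ha.const_mul_atBot two_pos
      have he : Tendsto (fun v : ℝ => Real.exp (2 * (v + δ))) atBot (nhds 0) :=
        Real.tendsto_exp_atBot.comp hm2
      have hA : Tendsto (fun v : ℝ => (2*Real.pi) * ((4 / Real.pi) * Real.exp (2 * (v + δ))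
          * |u - (-(Real.pi/2))|)) atBot
          (nhds ((2*Real.pi) * (4/Real.pi) * |u - (-(Real.pi/2))| * 0)) :=
        (he.const_mul ((2*Real.pi) * (4/Real.pi) * |u - (-(Real.pi/2))|)).congr
          (fun v => by ring)
      simpa using hA
  constructor
  · have hsum := (((Complex.continuous_ofReal.tendsto _).comp hFtop).neg).add hHtop
    have h := hsum.congr (fun v : ℝ => (theta_eq δ u v).symm)
    have hc : -((2*δ : ℝ) : ℂ) + 0 = ((-(2*δ) : ℝ) : ℂ) := by push_cast; ring
    rw [hc] at h
    exact h
  · have hsum := (((Complex.continuous_ofReal.tendsto _).comp hFbot).neg).add hHbot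
    have h := hsum.congr (fun v : ℝ => (theta_eq δ u v).symm)
    have hc : -((-(2*δ) : ℝ) : ℂ) + 0 = (((2*δ) : ℝ) : ℂ) := by push_cast; ring
    rw [hc] at h
    exact h
end
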